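/- Let G be a torsion-free group in which the centralizer Z(a) of every nontrivial element a is a cyclic group. Then G satisfies property (N): for every x ∈ G, every finite subset S ⊆ G and every integer n ≥ 1, x^n ∈ Z(S) implies x ∈ Z(S). -/
import Mathlib

/-- A torsion-free group with cyclic centralizers of nontrivial elements
satisfies property (N). -/
theorem cyclic_centralizers_propertyN (G : Type*) [Group G]
    (htf : ∀ g : G, IsOfFinOrder g → g = 1)
    (hcyc : ∀ a : G, a ≠ 1 → IsCyclic (Subgroup.centralizer ({a} : Set G)))
    (x : G) (S : Finset G) (n : ℕ) (hn : 1 ≤ n)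
    (h : x ^ n ∈ Subgroup.centralizer (S : Set G)) :
    x ∈ Subgroup.centralizer (S : Set G) := by
  by_cases hx1 : x = 1
  · subst hx1
    intro s _
    simp
  have hxn : x ^ n ≠ 1 := by
    intro hne
    exact hx1 (htf x (isOfFinOrder_iff_pow_eq_one.2 ⟨n, hn, hne⟩))
  have hc := hcyc (x ^ n) hxn
  haveI := hc
  letI : CommGroup (Subgroup.centralizer ({x ^ n} : Set G)) := IsCyclic.commGroup
  rw [Subgroup.mem_centralizer_iff]
  intro s hs
  have hxmem : x ∈ Subgroup.centralizer ({x ^ n} : Set G) := by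
    rw [Subgroup.mem_centralizer_iff]
    intro g hg
    rw [Set.mem_singleton_iff] at hg
    subst hg
    exact (Commute.self_pow x n).symm
  have hsmem : s ∈ Subgroup.centralizer ({x ^ n} : Set G) := by
    rw [Subgroup.mem_centralizer_iff]
    intro g hg
    rw [Set.mem_singleton_iff] at hg
    subst hg
    exact (Subgroup.mem_centralizer_iff.1 h s hs).symm
  have := mul_comm (⟨x, hxmem⟩ : Subgroup.centralizer ({x ^ n} : Set G)) ⟨s, hsmem⟩
  exact (Subtype.ext_iff.1 this).symm
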